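/- There exists a uniformly computable sequence ⟨f_e : e ∈ ℕ⟩ of functions from ℕ to ℕ such that every Seq*(TS¹)-solution H to ⟨f_e⟩ computes a function g : ℕ → ℕ that is not dominated by any total computable function; in particular, every Seq*(TS¹)-solution to ⟨f_e⟩ is of hyperimmune degree. (This is the computability-theoretic core of the result that Seq*(TS¹) implies OPT.) -/

import Mathlib

namespace IterJump

open scoped Classical

/-- `RecIn g f` : the partial function `f` is partial recursive relative to the
total oracle `g : ℕ → ℕ`.  This mirrors `Nat.Partrec` with an extra `oracle` clause. -/
inductive RecIn (g : ℕ → ℕ) : (ℕ →. ℕ) → Prop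
  | zero : RecIn g (pure 0)
  | succ : RecIn g Nat.succ
  | left : RecIn g fun n => (Nat.unpair n).1
  | right : RecIn g fun n => (Nat.unpair n).2
  | oracle : RecIn g fun n => Part.some (g n)
  | pair {f h : ℕ →. ℕ} : RecIn g f → RecIn g h →
      RecIn g fun n => Nat.pair <$> f n <*> h n
  | comp {f h : ℕ →. ℕ} : RecIn g f → RecIn g h →
      RecIn g fun n => h n >>= f
  | prec {f h : ℕ →. ℕ} : RecIn g f → RecIn g h →
      RecIn g (Nat.unpaired fun a n =>
        n.rec (f a) fun y IH => do
          let i ← IH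
          h (Nat.pair a (Nat.pair y i)))
  | rfind {f : ℕ →. ℕ} : RecIn g f →
      RecIn g fun a => Nat.rfind fun n => (fun m => m = 0) <$> f (Nat.pair a n)

/-- Codes for oracle machines: `Nat.Partrec.Code` with an extra `oracle` constructor. -/
inductive OCode : Type
  | zero : OCode
  | succ : OCode
  | left : OCode
  | right : OCode
  | oracle : OCode
  | pair : OCode → OCode → OCode
  | comp : OCode → OCode → OCode
  | prec : OCode → OCode → OCode
  | rfind' : OCode → OCode

/-- Evaluation of an oracle code relative to the total oracle `g`. -/
def OCode.eval (g : ℕ → ℕ) : OCode → ℕ →. ℕ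
  | OCode.zero => pure 0
  | OCode.succ => fun n => Part.some (n + 1)
  | OCode.left => fun n => Part.some (Nat.unpair n).1
  | OCode.right => fun n => Part.some (Nat.unpair n).2
  | OCode.oracle => fun n => Part.some (g n)
  | OCode.pair cf cg => fun n => Nat.pair <$> OCode.eval g cf n <*> OCode.eval g cg n
  | OCode.comp cf cg => fun n => OCode.eval g cg n >>= OCode.eval g cf
  | OCode.prec cf cg =>
    Nat.unpaired fun a n =>
      n.rec (OCode.eval g cf a) fun y IH => do
        let i ← IH
        OCode.eval g cg (Nat.pair a (Nat.pair y i))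
  | OCode.rfind' cf =>
    Nat.unpaired fun a m =>
      (Nat.rfind fun n => (fun x => x = 0) <$> OCode.eval g cf (Nat.pair a (n + m))).map (· + m)

/-- A standard numbering of oracle codes (adapted from `Nat.Partrec.Code.ofNatCode`). -/
def ofNatOCode : ℕ → OCode
  | 0 => OCode.zero
  | 1 => OCode.succ
  | 2 => OCode.left
  | 3 => OCode.right
  | 4 => OCode.oracle
  | n + 5 =>
    let m := n.div2.div2
    have hm : m < n + 5 := by
      simp only [m, Nat.div2_val]
      exact lt_of_le_of_lt (le_trans (Nat.div_le_self _ _) (Nat.div_le_self _ _))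
        (Nat.lt_succ_of_le (Nat.le_add_right _ 4))
    have m1 : m.unpair.1 < n + 5 := lt_of_le_of_lt m.unpair_left_le hm
    have m2 : m.unpair.2 < n + 5 := lt_of_le_of_lt m.unpair_right_le hm
    match n.bodd, n.div2.bodd with
    | false, false => OCode.pair (ofNatOCode m.unpair.1) (ofNatOCode m.unpair.2)
    | false, true => OCode.comp (ofNatOCode m.unpair.1) (ofNatOCode m.unpair.2)
    | true, false => OCode.prec (ofNatOCode m.unpair.1) (ofNatOCode m.unpair.2)
    | true, true => OCode.rfind' (ofNatOCode m)
decreasing_by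
  all_goals
    first
    | exact m1 | exact m2 | exact hm
    | exact Nat.le_of_lt_succ m1 | exact Nat.le_of_lt_succ m2 | exact Nat.le_of_lt_succ hm

/-- `phi g e` = `Φ_e^g`, the `e`-th partial function relative to the oracle `g`. -/
def phi (g : ℕ → ℕ) (e : ℕ) : ℕ →. ℕ := (ofNatOCode e).eval g

/-- Characteristic function of a set of naturals. -/
noncomputable def chi (A : Set ℕ) : ℕ → ℕ := fun n => if n ∈ A then 1 else 0

/-- `X` computes the total function `f`. -/
def ComputesFun (X : Set ℕ) (f : ℕ → ℕ) : Prop :=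
  RecIn (chi X) fun n => Part.some (f n)

/-- Turing reducibility `A ≤_T B` for sets of naturals. -/
def TLE (A B : Set ℕ) : Prop := ComputesFun B (chi A)

/-- Effective join (recursive join) of two sets. -/
def join (A B : Set ℕ) : Set ℕ :=
  {n | (n % 2 = 0 ∧ n / 2 ∈ A) ∨ (n % 2 = 1 ∧ n / 2 ∈ B)}

/-- The Turing jump of `A`. -/
def jump (A : Set ℕ) : Set ℕ := {e | (phi (chi A) e e).Dom}

/-- The `m`-th iterated Turing jump. -/
def jumpIter : ℕ → Set ℕ → Set ℕ
  | 0, A => A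
  | m + 1, A => jump (jumpIter m A)

/-- A (nonempty) Turing ideal: closed downward under `≤_T` and under join. -/
def TuringIdeal (I : Set (Set ℕ)) : Prop :=
  I.Nonempty ∧ (∀ A ∈ I, ∀ B : Set ℕ, TLE B A → B ∈ I) ∧
    (∀ A ∈ I, ∀ B ∈ I, join A B ∈ I)

/-- `f` is diagonally noncomputable (DNC) over the set `D`. -/
def DNCFun (D : Set ℕ) (f : ℕ → ℕ) : Prop :=
  ∀ e v : ℕ, v ∈ phi (chi D) e e → f e ≠ v

/-- The set `X` is DNC over `D`: `X` computes a DNC function over `D`. -/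
def DNCSet (D X : Set ℕ) : Prop := ∃ f : ℕ → ℕ, ComputesFun X f ∧ DNCFun D f

/-- `g` is `h`-DNC over `D`: DNC over `D` and bounded by `h`. -/
def HDNCFun (h : ℕ → ℕ) (D : Set ℕ) (g : ℕ → ℕ) : Prop :=
  DNCFun D g ∧ ∀ x, g x < h x

/-- The set `X` is `h`-DNC over `D`: `X` computes an `h`-bounded DNC function over `D`. -/
def HDNCSet (h : ℕ → ℕ) (D X : Set ℕ) : Prop :=
  ∃ g : ℕ → ℕ, ComputesFun X g ∧ HDNCFun h D g

/-- `T ⊆ 2^{<ℕ}` is a tree: closed under prefixes. -/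
def IsTree (T : Set (List Bool)) : Prop :=
  ∀ σ ∈ T, ∀ τ : List Bool, τ <+: σ → τ ∈ T

/-- Characteristic function (on codes) of a set of binary strings. -/
noncomputable def treeChi (T : Set (List Bool)) : ℕ → ℕ :=
  fun n => if ∃ σ ∈ T, Encodable.encode σ = n then 1 else 0

/-- `Y ≫ X` : `Y` is of PA degree over `X`, i.e. `Y` computes a path through every
`X`-computable infinite subtree of `2^{<ℕ}`. -/
def PAover (Y X : Set ℕ) : Prop :=
  ∀ T : Set (List Bool), IsTree T → T.Infinite → ComputesFun X (treeChi T) →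
    ∃ f : ℕ → Bool, (∀ n : ℕ, (List.ofFn fun i : Fin n => f i.val) ∈ T) ∧
      ComputesFun Y (fun n => cond (f n) 1 0)

/-- `σ` is an initial segment of the infinite binary sequence `X`. -/
def PrefixOfSeq (σ : List Bool) (X : ℕ → Bool) : Prop :=
  σ = List.ofFn fun i : Fin σ.length => X i.val

/-- The open subset of Cantor space generated by the strings in `S` has measure
at most `2^{-n}`: for each `k`, at most a `2^{-n}` fraction of the length-`k`
strings extend an element of `S`. -/
def MeasureLE (S : Set (List Bool)) (n : ℕ) : Prop :=
  ∀ k : ℕ, Nat.card {τ : Fin k → Bool // ∃ σ ∈ S, σ <+: List.ofFn τ} * 2 ^ n ≤ 2 ^ k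

/-- `W` is computably enumerable in the set `D`. -/
def CEin (D : Set ℕ) (W : Set ℕ) : Prop :=
  ∃ f : ℕ →. ℕ, RecIn (chi D) f ∧ W = f.Dom

/-- `U` is a Martin-Löf test over `D`: a uniformly `Σ⁰₁(D)` sequence of open sets
of Cantor space with `μ(U n) ≤ 2^{-n}`. -/
def MLTest (D : Set ℕ) (U : ℕ → Set (List Bool)) : Prop :=
  CEin D {p : ℕ | ∃ n : ℕ, ∃ σ ∈ U n, p = Nat.pair n (Encodable.encode σ)} ∧
    ∀ n, MeasureLE (U n) n

/-- The infinite binary sequence associated with a set of naturals. -/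
noncomputable def setSeq (A : Set ℕ) : ℕ → Bool := fun n => if n ∈ A then true else false

/-- `R` is 1-random over `D`: `R` passes every Martin-Löf test over `D`. -/
def Random1 (D R : Set ℕ) : Prop :=
  ∀ U : ℕ → Set (List Bool), MLTest D U →
    ∃ n : ℕ, ∀ σ ∈ U n, ¬ PrefixOfSeq σ (setSeq R)

/-- `G` computes a set that is 1-random over `D`. -/
def ComputesRandom (D G : Set ℕ) : Prop := ∃ R : Set ℕ, TLE R G ∧ Random1 D R

/-- `f` dominates `g`: `f n ≥ g n` for all sufficiently large `n`. -/
def Dominates (f g : ℕ → ℕ) : Prop := ∃ N : ℕ, ∀ n ≥ N, g n ≤ f n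

/-- `A =* B` : the symmetric difference of `A` and `B` is finite. -/
def EqStar (A B : Set ℕ) : Prop := ((A \ B) ∪ (B \ A)).Finite

section Aux

open Nat.Partrec (Code)
open Nat.Partrec.Code

/-! ### Relativized computation: closure lemmas -/

theorem recIn_of_partrec {g : ℕ → ℕ} {f : ℕ →. ℕ} (h : Nat.Partrec f) : RecIn g f := by
  induction h with
  | zero => exact RecIn.zero
  | succ => exact RecIn.succ
  | left => exact RecIn.left
  | right => exact RecIn.right
  | pair _ _ ih1 ih2 => exact RecIn.pair ih1 ih2
  | comp _ _ ih1 ih2 => exact RecIn.comp ih1 ih2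
  | prec _ _ ih1 ih2 => exact RecIn.prec ih1 ih2
  | rfind _ ih => exact RecIn.rfind ih

theorem RecIn.of_eq {g : ℕ → ℕ} {f f' : ℕ →. ℕ} (h : RecIn g f) (H : ∀ n, f n = f' n) :
    RecIn g f' := (funext H : f = f') ▸ h

/-- the "next element of `H`" function. -/
noncomputable def nextIn (H : Set ℕ) (a : ℕ) : ℕ := sInf {k | a < k ∧ k ∈ H}

theorem nextIn_spec {H : Set ℕ} (hH : H.Infinite) (a : ℕ) :
    a < nextIn H a ∧ nextIn H a ∈ H := by
  have : {k | a < k ∧ k ∈ H}.Nonempty := by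
    obtain ⟨b, hb, hab⟩ := hH.exists_gt a
    exact ⟨b, hab, hb⟩
  exact Nat.sInf_mem this

theorem nextIn_min {H : Set ℕ} {a m : ℕ} (h : m < nextIn H a) : ¬(a < m ∧ m ∈ H) :=
  Nat.notMem_of_lt_sInf h

/-- test function used in the rfind computation of `nextIn`. -/
def nextT : ℕ → ℕ := fun z =>
  if (Nat.unpair (Nat.unpair z).2).1 < (Nat.unpair (Nat.unpair z).2).2 ∧ (Nat.unpair z).1 = 1
  then 0 else 1

theorem nextT_primrec : Primrec nextT := by
  have h1 : Primrec fun z : ℕ => (Nat.unpair (Nat.unpair z).2).1 :=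
    Primrec.fst.comp (Primrec.unpair.comp (Primrec.snd.comp Primrec.unpair))
  have h2 : Primrec fun z : ℕ => (Nat.unpair (Nat.unpair z).2).2 :=
    Primrec.snd.comp (Primrec.unpair.comp (Primrec.snd.comp Primrec.unpair))
  have h3 : Primrec fun z : ℕ => (Nat.unpair z).1 :=
    Primrec.fst.comp Primrec.unpair
  have hp : PrimrecPred fun z : ℕ =>
      (Nat.unpair (Nat.unpair z).2).1 < (Nat.unpair (Nat.unpair z).2).2 ∧
        (Nat.unpair z).1 = 1 :=
    PrimrecPred.and (Primrec.nat_lt.comp h1 h2) (Primrec.eq.comp h3 (Primrec.const 1))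
  exact Primrec.ite hp (Primrec.const 0) (Primrec.const 1)

theorem computes_nextIn {H : Set ℕ} (hH : H.Infinite) : ComputesFun H (nextIn H) := by
  have hO : RecIn (chi H) fun n => Part.some (chi H (Nat.unpair n).2) :=
    (RecIn.comp RecIn.oracle RecIn.right).of_eq (by intro n; simp [PFun.coe_val])
  have hid : RecIn (chi H) ((id : ℕ → ℕ) : ℕ →. ℕ) :=
    recIn_of_partrec (Nat.Partrec.of_primrec Nat.Primrec.id)
  have hP : RecIn (chi H) fun n => Part.some (Nat.pair (chi H (Nat.unpair n).2) n) :=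
    (RecIn.pair hO hid).of_eq (by intro n; simp [Seq.seq, PFun.coe_val])
  have hT : RecIn (chi H) (nextT : ℕ →. ℕ) :=
    recIn_of_partrec (Partrec.nat_iff.1 nextT_primrec.to_comp)
  have hF : RecIn (chi H)
      fun n => Part.some (nextT (Nat.pair (chi H (Nat.unpair n).2) n)) :=
    (RecIn.comp hT hP).of_eq (by intro n; exact Part.bind_some _ _)
  have hG := RecIn.rfind hF
  refine hG.of_eq fun a => ?_
  rw [Part.eq_some_iff]
  apply Nat.mem_rfind.2
  constructor
  · obtain ⟨h1, h2⟩ := nextIn_spec hH a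
    simp only [Part.map_eq_map, Part.mem_map_iff, Part.mem_some_iff]
    refine ⟨nextT (Nat.pair (chi H (Nat.unpair (Nat.pair a (nextIn H a))).2)
      (Nat.pair a (nextIn H a))), ⟨rfl, ?_⟩⟩
    simp [nextT, Nat.unpair_pair, h1, chi, h2]
  · intro mm hm
    simp only [Part.map_eq_map, Part.mem_map_iff, Part.mem_some_iff]
    refine ⟨nextT (Nat.pair (chi H (Nat.unpair (Nat.pair a mm)).2) (Nat.pair a mm)), ⟨rfl, ?_⟩⟩
    have := nextIn_min hm
    simp only [nextT, Nat.unpair_pair, chi]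
    by_cases hlt : a < mm
    · have hmH : mm ∉ H := fun h => this ⟨hlt, h⟩
      simp [hlt, hmH]
    · simp [hlt]

/-! ### The coloring -/

def cde (e : ℕ) : Code := Denumerable.ofNat Code e

def closesB (e n x : ℕ) : Bool :=
  ((evaln x (cde e) n).map fun v => decide (v ≤ x)).getD false

def stateF (e : ℕ) (x : ℕ) : ℕ × ℕ :=
  Nat.rec (motive := fun _ => ℕ × ℕ) (0, 0)
    (fun y ih => cond (closesB e ih.2 (y + 1)) (ih.1 + 1, y + 1) ih) x

def fcol (e x : ℕ) : ℕ := (Nat.unpair (stateF e (x - 1)).1).1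

theorem stateF_zero (e : ℕ) : stateF e 0 = (0, 0) := rfl

theorem stateF_succ (e x : ℕ) :
    stateF e (x + 1) =
      cond (closesB e (stateF e x).2 (x + 1)) ((stateF e x).1 + 1, x + 1) (stateF e x) := rfl

theorem stateF_step (e x : ℕ) :
    stateF e (x + 1) = stateF e x ∨
      stateF e (x + 1) = ((stateF e x).1 + 1, x + 1) := by
  rw [stateF_succ]
  cases closesB e (stateF e x).2 (x + 1) <;> simp

theorem stateF_fst_le_succ (e x : ℕ) : (stateF e x).1 ≤ (stateF e (x + 1)).1 := by
  rcases stateF_step e x with h | h <;> rw [h] <;> simp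

theorem stateF_fst_mono (e : ℕ) : Monotone fun x => (stateF e x).1 :=
  monotone_nat_of_le_succ (stateF_fst_le_succ e)

theorem stateF_snd_le (e x : ℕ) : (stateF e x).2 ≤ x := by
  induction x with
  | zero => simp [stateF_zero]
  | succ y ih =>
    rcases stateF_step e y with h | h
    · rw [h]; exact ih.trans (Nat.le_succ y)
    · rw [h]

theorem stateF_fst_le_snd (e x : ℕ) : (stateF e x).1 ≤ (stateF e x).2 := by
  induction x with
  | zero => simp [stateF_zero]
  | succ y ih =>
    rcases stateF_step e y with h | h
    · rw [h]; exact ih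
    · rw [h]
      exact Nat.succ_le_succ (ih.trans (stateF_snd_le e y))

theorem stateF_eq_of_fst_eq (e : ℕ) :
    ∀ (x d : ℕ), (stateF e (x + d)).1 = (stateF e x).1 → stateF e (x + d) = stateF e x := by
  intro x d
  induction d with
  | zero => intro _; rfl
  | succ d ih =>
    intro h
    have hxd : (stateF e (x + d)).1 = (stateF e x).1 := by
      refine le_antisymm ?_ (stateF_fst_mono e (Nat.le_add_right x d))
      calc (stateF e (x + d)).1 ≤ (stateF e (x + d + 1)).1 := stateF_fst_le_succ e _
        _ = (stateF e x).1 := h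
    have hst := ih hxd
    rw [Nat.add_succ] at h ⊢
    rcases stateF_step e (x + d) with h' | h'
    · rw [h', hst]
    · exfalso
      rw [h'] at h
      simp only at h
      omega

theorem stateF_attain (e : ℕ) {q y : ℕ} (h : q + 1 ≤ (stateF e y).1) :
    ∃ z, (stateF e z).1 = q ∧ stateF e (z + 1) = (q + 1, z + 1) := by
  induction y with
  | zero => simp [stateF_zero] at h
  | succ y ih =>
    by_cases hy : q + 1 ≤ (stateF e y).1
    · exact ih hy
    · rcases stateF_step e y with h' | h'
      · rw [h'] at h; exact absurd h hy
      · rw [h'] at h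
        simp only at h
        have hq : (stateF e y).1 = q := by omega
        exact ⟨y, hq, by rw [h', hq]⟩

theorem stateF_self_open (e : ℕ) : ∀ x, stateF e ((stateF e x).2) = stateF e x := by
  intro x
  induction x with
  | zero => rfl
  | succ y ih =>
    rcases stateF_step e y with h | h
    · rw [h]; exact ih
    · rw [h]; exact h

/-- With a total code, the requirement counter is unbounded. -/
theorem stateF_unbounded {e : ℕ} {cf : ℕ → ℕ}
    (he : ∀ n, eval (cde e) n = Part.some (cf n)) :
    ∀ q, ∃ y, q ≤ (stateF e y).1 := by
  intro q
  induction q with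
  | zero => exact ⟨0, Nat.zero_le _⟩
  | succ q ih =>
    obtain ⟨y, hy⟩ := ih
    set n := (stateF e y).2 with hn
    have hv : cf n ∈ eval (cde e) n := by rw [he n]; exact Part.mem_some _
    obtain ⟨k, hk⟩ := evaln_complete.1 hv
    set z := y + k + cf n with hz
    have h4 : (stateF e y).1 ≤ (stateF e z).1 := stateF_fst_mono e (by omega)
    by_contra hcon
    push_neg at hcon
    have h1 : (stateF e (z + 1)).1 ≤ q := by
      have := hcon (z + 1); omega
    have h2 : q ≤ (stateF e z).1 :=
      hy.trans (stateF_fst_mono e (by omega))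
    have h3 : (stateF e z).1 ≤ (stateF e (z + 1)).1 := stateF_fst_le_succ e z
    have hzq : (stateF e z).1 = q := by omega
    have hyz : stateF e z = stateF e y := by
      obtain ⟨d, hd⟩ := Nat.le.dest (show y ≤ z by omega)
      rw [← hd]
      apply stateF_eq_of_fst_eq
      rw [hd, hzq]
      omega
    have hsnd : (stateF e z).2 = n := by rw [hyz]
    have hcl : closesB e n (z + 1) = true := by
      have hmono : cf n ∈ evaln (z + 1) (cde e) n :=
        evaln_mono (by omega) hk
      have : evaln (z + 1) (cde e) n = some (cf n) := hmono
      simp only [closesB, this, Option.map_some, Option.getD_some, decide_eq_true_eq]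
      omega
    have : stateF e (z + 1) = ((stateF e z).1 + 1, z + 1) := by
      rw [stateF_succ, hsnd, hcl]; rfl
    rw [this] at h1
    simp only at h1
    omega

/-- Main combinatorial property: each color contains arbitrarily late intervals
`(n, M]` with `M ≥ cf n`. -/
theorem fcol_intervals {e : ℕ} {cf : ℕ → ℕ}
    (he : ∀ n, eval (cde e) n = Part.some (cf n)) (m N : ℕ) :
    ∃ n M, N ≤ n ∧ n < M ∧ cf n ≤ M ∧ ∀ x, n < x → x ≤ M → fcol e x = m := by
  set Q := Nat.pair m N with hQ
  obtain ⟨y, hy⟩ := stateF_unbounded he (Q + 1)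
  obtain ⟨z, hz1, hz2⟩ := stateF_attain e hy
  set n := (stateF e z).2 with hn
  refine ⟨n, z + 1, ?_, ?_, ?_, ?_⟩
  · -- N ≤ n
    have h1 : Q ≤ n := hz1 ▸ stateF_fst_le_snd e z
    exact (Nat.right_le_pair m N).trans h1
  · -- n < z + 1
    exact Nat.lt_succ_of_le (stateF_snd_le e z)
  · -- cf n ≤ z + 1
    have hne : stateF e (z + 1) ≠ stateF e z := by
      intro h; rw [h] at hz2; rw [hz2] at hz1; simp at hz1
    have hcl : closesB e n (z + 1) = true := by
      by_contra h
      apply hne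
      rw [stateF_succ, ← hn]
      simp only [Bool.not_eq_true] at h
      rw [h]
      rfl
    simp only [closesB] at hcl
    rcases hev : evaln (z + 1) (cde e) n with _ | v
    · rw [hev] at hcl; simp at hcl
    · rw [hev] at hcl
      simp only [Option.map_some, Option.getD_some, decide_eq_true_eq] at hcl
      have : v ∈ eval (cde e) n := evaln_sound hev
      rw [he n] at this
      rw [Part.mem_some_iff] at this
      omega
  · -- colors
    intro x hx1 hx2
    have hw : ∀ w, n ≤ w → w ≤ z → (stateF e w).1 = Q := by
      intro w hw1 hw2
      have hl : Q ≤ (stateF e w).1 := by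
        have : stateF e n = stateF e z := stateF_self_open e z
        have h1 : (stateF e n).1 = Q := by rw [this, hz1]
        calc Q = (stateF e n).1 := h1.symm
          _ ≤ (stateF e w).1 := stateF_fst_mono e hw1
      have hr : (stateF e w).1 ≤ Q := by
        calc (stateF e w).1 ≤ (stateF e z).1 := stateF_fst_mono e hw2
          _ = Q := hz1
      omega
    have hx1' : n ≤ x - 1 := by omega
    have hx2' : x - 1 ≤ z := by omega
    have : (stateF e (x - 1)).1 = Q := hw _ hx1' hx2'
    simp only [fcol, this, hQ, Nat.unpair_pair]

/-! ### Computability of the coloring -/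

theorem closesB_primrec : Primrec fun p : ℕ × ℕ × ℕ => closesB p.1 p.2.1 p.2.2 := by
  have ho : Primrec fun p : ℕ × ℕ × ℕ => evaln p.2.2 (cde p.1) p.2.1 := by
    have : Primrec fun p : ℕ × ℕ × ℕ => ((p.2.2, cde p.1), p.2.1) :=
      ((Primrec.snd.comp Primrec.snd).pair
        ((Primrec.ofNat Code).comp Primrec.fst)).pair (Primrec.fst.comp Primrec.snd)
    exact primrec_evaln.comp this
  have hg : Primrec₂ fun (p : ℕ × ℕ × ℕ) (v : ℕ) => decide (v ≤ p.2.2) :=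
    Primrec.nat_le.comp Primrec.snd (Primrec.snd.comp (Primrec.snd.comp Primrec.fst)) |>.decide.to₂
  have := Primrec.option_casesOn ho (Primrec.const false) hg
  refine this.of_eq fun p => ?_
  rcases h : evaln p.2.2 (cde p.1) p.2.1 with _ | v <;> simp [closesB, h]

theorem stateF_primrec : Primrec₂ stateF := by
  have hg : Primrec₂ fun (e : ℕ) (p : ℕ × ℕ × ℕ) =>
      cond (closesB e p.2.2 (p.1 + 1)) (p.2.1 + 1, p.1 + 1) p.2 := by
    have hc : Primrec fun q : ℕ × ℕ × ℕ × ℕ => closesB q.1 q.2.2.2 (q.2.1 + 1) :=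
      closesB_primrec.comp (Primrec.fst.pair
        ((Primrec.snd.comp (Primrec.snd.comp Primrec.snd)).pair
          (Primrec.succ.comp (Primrec.fst.comp Primrec.snd))))
    have hf : Primrec fun q : ℕ × ℕ × ℕ × ℕ => (q.2.2.1 + 1, q.2.1 + 1) :=
      (Primrec.succ.comp (Primrec.fst.comp (Primrec.snd.comp Primrec.snd))).pair
        (Primrec.succ.comp (Primrec.fst.comp Primrec.snd))
    have hh : Primrec fun q : ℕ × ℕ × ℕ × ℕ => q.2.2 :=
      Primrec.snd.comp Primrec.snd
    exact (Primrec.cond hc hf hh).to₂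
  have := Primrec.nat_rec (Primrec.const ((0, 0) : ℕ × ℕ)) hg
  exact this.of_eq fun e x => rfl

theorem fcol_computable : Computable₂ fcol := by
  have : Primrec₂ fcol := by
    have h1 : Primrec fun p : ℕ × ℕ => stateF p.1 (p.2 - 1) :=
      stateF_primrec.comp Primrec.fst (Primrec.pred.comp Primrec.snd)
    exact (Primrec.fst.comp (Primrec.unpair.comp (Primrec.fst.comp h1))).to₂
  exact this.to_comp

end Aux

/-- There is a uniformly computable sequence `⟨f_e⟩` such that every
`Seq*(TS¹)`-solution `H` to `⟨f_e⟩` computes a function `g` not dominated by any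
total computable function (hence every solution is of hyperimmune degree). -/
theorem seqTS1_implies_hyperimmune :
    ∃ f : ℕ → ℕ → ℕ, Computable₂ f ∧
      ∀ H : Set ℕ, H.Infinite →
        (∀ e : ℕ, ∃ He : Set ℕ, EqStar He H ∧ (f e) '' He ≠ Set.univ) →
        ∃ g : ℕ → ℕ, ComputesFun H g ∧
          ∀ c : ℕ → ℕ, Computable c → ¬ Dominates c g := by
  classical
  refine ⟨fcol, fcol_computable, ?_⟩
  intro H hH hyp
  refine ⟨nextIn H, computes_nextIn hH, ?_⟩
  intro c hc hdom
  obtain ⟨N, hN⟩ := hdom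
  set c₁ : ℕ → ℕ := fun n => c n + n + 1 with hc₁def
  have hc₁ : Computable c₁ := by
    have hadd : Computable₂ (fun a b : ℕ => a + b) := Primrec.nat_add.to_comp
    have h1 : Computable fun n : ℕ => c n + n := hadd.comp hc Computable.id
    exact (Computable.succ.comp h1).of_eq fun n => rfl
  have hpart : Nat.Partrec (c₁ : ℕ →. ℕ) := Partrec.nat_iff.1 hc₁
  obtain ⟨code, hcode⟩ := Nat.Partrec.Code.exists_code.1 hpart
  set e := Encodable.encode code with hedef
  have he : ∀ n, Nat.Partrec.Code.eval (cde e) n = Part.some (c₁ n) := by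
    intro n
    rw [show cde e = code from Denumerable.ofNat_encode code, hcode]
    exact PFun.coe_val c₁ n
  obtain ⟨He, hstar, him⟩ := hyp e
  obtain ⟨m, hm⟩ := (Set.ne_univ_iff_exists_notMem _).1 him
  have hfin : (H \ He).Finite := hstar.subset Set.subset_union_right
  obtain ⟨b, hb⟩ := hfin.bddAbove
  obtain ⟨n, M, hn1, hn2, hn3, hcolor⟩ := fcol_intervals he m (max N (b + 1))
  have hnb : b + 1 ≤ n := le_trans (le_max_right _ _) hn1
  have hnN : N ≤ n := le_trans (le_max_left _ _) hn1
  have hempty : ∀ x, n < x → x ≤ M → x ∉ H := by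
    intro x h1 h2 hxH
    by_cases hxe : x ∈ He
    · exact hm ⟨x, hxe, hcolor x h1 h2⟩
    · have hxb : x ≤ b := hb ⟨hxH, hxe⟩
      omega
  obtain ⟨hlt, hmem⟩ := nextIn_spec hH n
  have hgtM : M < nextIn H n := by
    by_contra h
    push_neg at h
    exact hempty _ hlt h hmem
  have hle := hN n hnN
  have hc₁n : c₁ n = c n + n + 1 := rfl
  omega

end IterJump
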